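/- arXiv:1204.5494 — 3 statements merged into one kernel-verified Lean document; each statement's English description precedes it below -/
import Mathlib

section
/- Let t > 0 and p = (0, t) ∈ ℝ². Let q₁ = (u₁, v₁) and q₂ = (u₂, v₂) be points of the unit circle centered at the origin (i.e. ‖q₁‖ = ‖q₂‖ = 1) with q₁ ≠ p and q₂ ≠ q₁, and suppose the chord [q₁, q₂] is perpendicular to the segment [p, q₁], i.e. ⟪q₂ − q₁, q₁ − p⟫ = 0. Then u₂ · ‖q₁ − p‖² = (1 − t²) · u₁; equivalently, u₂ · (1 − 2·v₁·t + t²) = (1 − t²) · u₁. -/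
open scoped RealInnerProductSpace

/-- Chord formula on the unit circle (proof of Lemma 3.4 of the paper):
if `q₁`, `q₂` lie on the unit circle, `p = (0, t)` with `t > 0`, and the chord
`[q₁, q₂]` is perpendicular to `[p, q₁]`, then
`u₂ · ‖q₁ − p‖² = (1 − t²) · u₁`, equivalently
`u₂ · (1 − 2·v₁·t + t²) = (1 − t²) · u₁`. -/
theorem stmt0 (t u₁ v₁ u₂ v₂ : ℝ) (ht : 0 < t)
    (p q₁ q₂ : EuclideanSpace ℝ (Fin 2))
    (hp0 : p 0 = 0) (hp1 : p 1 = t)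
    (hq₁0 : q₁ 0 = u₁) (hq₁1 : q₁ 1 = v₁)
    (hq₂0 : q₂ 0 = u₂) (hq₂1 : q₂ 1 = v₂)
    (hq₁ : ‖q₁‖ = 1) (hq₂ : ‖q₂‖ = 1)
    (hne₁ : q₁ ≠ p) (hne₂ : q₂ ≠ q₁)
    (hperp : ⟪q₂ - q₁, q₁ - p⟫ = 0) :
    u₂ * ‖q₁ - p‖ ^ 2 = (1 - t ^ 2) * u₁ ∧
      u₂ * (1 - 2 * v₁ * t + t ^ 2) = (1 - t ^ 2) * u₁ := by
  have h1 : u₁ ^ 2 + v₁ ^ 2 = 1 := by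
    have := real_inner_self_eq_norm_sq q₁
    rw [hq₁] at this
    simp only [PiLp.inner_apply, RCLike.inner_apply, conj_trivial, Fin.sum_univ_two,
      hq₁0, hq₁1] at this
    nlinarith [this]
  have h2 : u₂ ^ 2 + v₂ ^ 2 = 1 := by
    have := real_inner_self_eq_norm_sq q₂
    rw [hq₂] at this
    simp only [PiLp.inner_apply, RCLike.inner_apply, conj_trivial, Fin.sum_univ_two,
      hq₂0, hq₂1] at this
    nlinarith [this]
  have hnp : ‖q₁ - p‖ ^ 2 = u₁ ^ 2 + (v₁ - t) ^ 2 := by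
    rw [← real_inner_self_eq_norm_sq]
    simp only [PiLp.inner_apply, RCLike.inner_apply, conj_trivial, Fin.sum_univ_two,
      PiLp.sub_apply, hq₁0, hq₁1, hp0, hp1]
    ring
  have hperp' : (u₂ - u₁) * u₁ + (v₂ - v₁) * (v₁ - t) = 0 := by
    rw [PiLp.inner_apply] at hperp
    simp only [RCLike.inner_apply, conj_trivial, Fin.sum_univ_two, PiLp.sub_apply,
      hq₁0, hq₁1, hq₂0, hq₂1, hp0, hp1] at hperp
    linarith [hperp]
  -- the difference vector is nonzero in some coordinate
  have hdne : u₂ - u₁ ≠ 0 ∨ v₂ - v₁ ≠ 0 := by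
    by_contra h
    push_neg at h
    apply hne₂
    have hu : u₂ = u₁ := by linarith [h.1]
    have hv : v₂ = v₁ := by linarith [h.2]
    ext i
    fin_cases i
    · simpa [hq₂0, hq₁0] using hu
    · simpa [hq₂1, hq₁1] using hv
  -- the "sum" relation from subtracting the two circle equations
  have hS : (u₂ + u₁) * (u₂ - u₁) + (v₂ + v₁) * (v₂ - v₁) = 0 := by nlinarith [h1, h2]
  -- determinant vanishes
  have hdet : u₁ * (v₂ + v₁) - (v₁ - t) * (u₂ + u₁) = 0 := by
    rcases hdne with h | h
    · have hmul : (u₁ * (v₂ + v₁) - (v₁ - t) * (u₂ + u₁)) * (u₂ - u₁) = 0 := by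
        linear_combination (v₂ + v₁) * hperp' - (v₁ - t) * hS
      rcases mul_eq_zero.mp hmul with h' | h'
      · exact h'
      · exact absurd h' h
    · have hmul : (u₁ * (v₂ + v₁) - (v₁ - t) * (u₂ + u₁)) * (v₂ - v₁) = 0 := by
        linear_combination u₁ * hS - (u₂ + u₁) * hperp'
      rcases mul_eq_zero.mp hmul with h' | h'
      · exact h'
      · exact absurd h' h
  have key : u₂ * (1 - 2 * v₁ * t + t ^ 2) = (1 - t ^ 2) * u₁ := by
    linear_combination u₁ * hperp' + (t - v₁) * hdet + (u₁ - u₂) * h1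
  refine ⟨?_, key⟩
  rw [hnp]
  linear_combination key + u₂ * h1
end

section
/- Let 0 < t < 1 and p = (0, t) ∈ ℝ². For each n ∈ ℕ let q₁ⁿ = (u₁ⁿ, v₁ⁿ) and q₂ⁿ = (u₂ⁿ, v₂ⁿ) be points of the unit circle centered at the origin with v₁ⁿ > 0, u₁ⁿ ≠ 0, q₂ⁿ ≠ q₁ⁿ, and ⟪q₂ⁿ − q₁ⁿ, q₁ⁿ − p⟫ = 0 (the chord [q₁ⁿ, q₂ⁿ] is perpendicular to [p, q₁ⁿ]). If u₁ⁿ → 0 as n → ∞, then u₂ⁿ / u₁ⁿ → (1 + t)/(1 − t). -/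
open scoped RealInnerProductSpace
open Filter

/-- Part (1) of Lemma 3.4 (lem:limit) of the paper: with `p = (0, t)`, `0 < t < 1`,
and points `q₁ⁿ = (u₁ⁿ, v₁ⁿ)`, `q₂ⁿ = (u₂ⁿ, v₂ⁿ)` on the unit circle with `v₁ⁿ > 0`,
`u₁ⁿ ≠ 0`, `q₂ⁿ ≠ q₁ⁿ` and the chord `[q₁ⁿ, q₂ⁿ]` perpendicular to `[p, q₁ⁿ]`,
if `u₁ⁿ → 0` then `u₂ⁿ / u₁ⁿ → (1 + t)/(1 − t)`. -/
theorem stmt1 (t : ℝ) (ht0 : 0 < t) (ht1 : t < 1)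
    (p : EuclideanSpace ℝ (Fin 2)) (hp0 : p 0 = 0) (hp1 : p 1 = t)
    (q₁ q₂ : ℕ → EuclideanSpace ℝ (Fin 2))
    (hq₁ : ∀ n, ‖q₁ n‖ = 1) (hq₂ : ∀ n, ‖q₂ n‖ = 1)
    (hv₁ : ∀ n, 0 < q₁ n 1) (hu₁ : ∀ n, q₁ n 0 ≠ 0)
    (hne : ∀ n, q₂ n ≠ q₁ n)
    (hperp : ∀ n, ⟪q₂ n - q₁ n, q₁ n - p⟫ = 0)
    (hlim : Tendsto (fun n => q₁ n 0) atTop (nhds 0)) :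
    Tendsto (fun n => q₂ n 0 / q₁ n 0) atTop (nhds ((1 + t) / (1 - t))) := by
  set u : ℕ → ℝ := fun n => q₁ n 0 with hu_def
  set v : ℕ → ℝ := fun n => q₁ n 1 with hv_def
  set U : ℕ → ℝ := fun n => q₂ n 0 with hU_def
  set V : ℕ → ℝ := fun n => q₂ n 1 with hV_def
  -- circle equations
  have hc1 : ∀ n, u n ^ 2 + v n ^ 2 = 1 := by
    intro n
    have h := hq₁ n
    rw [EuclideanSpace.norm_eq, Fin.sum_univ_two, Real.sqrt_eq_one] at h
    simpa [sq_abs] using h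
  have hc2 : ∀ n, U n ^ 2 + V n ^ 2 = 1 := by
    intro n
    have h := hq₂ n
    rw [EuclideanSpace.norm_eq, Fin.sum_univ_two, Real.sqrt_eq_one] at h
    simpa [sq_abs] using h
  -- perpendicularity in coordinates
  have hperp' : ∀ n, (U n - u n) * u n + (V n - v n) * (v n - t) = 0 := by
    intro n
    have h := hperp n
    simp only [PiLp.inner_apply, RCLike.inner_apply, starRingEnd_apply, star_trivial,
      Fin.sum_univ_two, PiLp.sub_apply] at h
    rw [hp0, hp1] at h
    linarith [h]
  -- v n = sqrt (1 - u n ^2)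
  have hv_eq : ∀ n, v n = Real.sqrt (1 - u n ^ 2) := by
    intro n
    have h1 : v n ^ 2 = 1 - u n ^ 2 := by linarith [hc1 n]
    rw [← h1, Real.sqrt_sq (hv₁ n).le]
  have hvlim : Tendsto v atTop (nhds 1) := by
    have : Tendsto (fun n => Real.sqrt (1 - u n ^ 2)) atTop (nhds 1) := by
      have h1 : Tendsto (fun n => 1 - u n ^ 2) atTop (nhds 1) := by
        have := hlim.pow 2
        simpa using (tendsto_const_nhds (x := (1:ℝ)) (f := atTop)).sub this
      have := (Real.continuous_sqrt.tendsto 1).comp h1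
      simpa [Function.comp_def] using this
    exact this.congr (fun n => (hv_eq n).symm)
  -- eventually v n > t
  have hev : ∀ᶠ n in atTop, t < v n := by
    exact hvlim.eventually (eventually_gt_nhds (by linarith))
  -- key eventual equality
  have hkey : ∀ᶠ n in atTop, U n / u n =
      (2 * v n * (v n - t) - (v n - t) ^ 2 + u n ^ 2) / ((v n - t) ^ 2 + u n ^ 2) := by
    filter_upwards [hev] with n hvt
    have hvt' : v n - t ≠ 0 := sub_ne_zero.mpr hvt.ne'
    have hUne : U n - u n ≠ 0 := by
      intro h
      have hUu : U n = u n := by linarith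
      have hVv : V n = v n := by
        have := hperp' n
        rw [hUu] at this
        have : (V n - v n) * (v n - t) = 0 := by linarith
        rcases mul_eq_zero.mp this with h' | h'
        · linarith
        · exact absurd h' hvt'
      apply hne n
      ext i
      fin_cases i
      · exact hUu
      · exact hVv
    have e1 := hperp' n
    have e2 : U n ^ 2 + V n ^ 2 = u n ^ 2 + v n ^ 2 := by rw [hc2 n, hc1 n]
    have e3 : (U n + u n) * (v n - t) - u n * (V n + v n) = 0 := by
      have hz : (U n - u n) * ((U n + u n) * (v n - t) - u n * (V n + v n)) = 0 := by
        linear_combination (v n - t) * e2 - (V n + v n) * e1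
      rcases mul_eq_zero.mp hz with h' | h'
      · exact absurd h' hUne
      · exact h'
    have hgoal : U n * ((v n - t) ^ 2 + u n ^ 2) =
        u n * (2 * v n * (v n - t) - (v n - t) ^ 2 + u n ^ 2) := by
      linear_combination (v n - t) * e3 + u n * e1
    have hune : u n ≠ 0 := hu₁ n
    have hden : (v n - t) ^ 2 + u n ^ 2 ≠ 0 := by positivity
    field_simp
    linear_combination hgoal
  -- limit of the explicit formula
  have hnum : Tendsto (fun n => 2 * v n * (v n - t) - (v n - t) ^ 2 + u n ^ 2) atTop
      (nhds (2 * 1 * (1 - t) - (1 - t) ^ 2 + 0 ^ 2)) := by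
    apply Tendsto.add
    · exact (((tendsto_const_nhds.mul hvlim).mul (hvlim.sub tendsto_const_nhds)).sub
        ((hvlim.sub tendsto_const_nhds).pow 2))
    · exact hlim.pow 2
  have hden : Tendsto (fun n => (v n - t) ^ 2 + u n ^ 2) atTop
      (nhds ((1 - t) ^ 2 + 0 ^ 2)) := by
    exact ((hvlim.sub tendsto_const_nhds).pow 2).add (hlim.pow 2)
  have hden_ne : (1 - t) ^ 2 + (0:ℝ) ^ 2 ≠ 0 := by
    simpa using pow_ne_zero 2 (by linarith : (1:ℝ) - t ≠ 0)
  have hdiv := hnum.div hden hden_ne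
  have hval : (2 * 1 * (1 - t) - (1 - t) ^ 2 + (0:ℝ) ^ 2) / ((1 - t) ^ 2 + 0 ^ 2)
      = (1 + t) / (1 - t) := by
    have h1t : (1:ℝ) - t ≠ 0 := by linarith
    field_simp
    ring
  rw [hval] at hdiv
  exact Tendsto.congr' (hkey.mono fun n h => h.symm) hdiv
end

section
/- Let 0 < t < 1, c ∈ ℝ, and p = (0, t) ∈ ℝ². For u ∈ (0, 1) set q₁(u) = (u, √(1 − u²)), let d(u) ∈ ℝ² be the counterclockwise rotation of the vector q₁(u) − p by the angle π/2 − c·u, and let q₂(u) = q₁(u) − (2⟪q₁(u), d(u)⟫ / ‖d(u)‖²) · d(u) be the second intersection point of the unit circle with the line through q₁(u) in direction d(u). Then the first coordinate u₂(u) of q₂(u) satisfies u₂(u)/u → (1 + t)/(1 − t) + 2c as u → 0⁺. -/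
open Filter

/-- The point `q₁(u) = (u, √(1 − u²))` of the unit circle. -/
noncomputable def q₁fun (u : ℝ) : ℝ × ℝ := (u, Real.sqrt (1 - u ^ 2))

/-- Counterclockwise rotation of a vector of `ℝ²` by angle `θ`. -/
noncomputable def rotCCW (θ : ℝ) (v : ℝ × ℝ) : ℝ × ℝ :=
  (v.1 * Real.cos θ - v.2 * Real.sin θ, v.1 * Real.sin θ + v.2 * Real.cos θ)

/-- The standard inner product of `ℝ²`. -/
def inner2 (v w : ℝ × ℝ) : ℝ := v.1 * w.1 + v.2 * w.2

/-- The direction `d(u)`: the vector `q₁(u) − p`, `p = (0, t)`, rotated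
counterclockwise by the angle `π/2 − c·u`. -/
noncomputable def dfun (t c u : ℝ) : ℝ × ℝ :=
  rotCCW (Real.pi / 2 - c * u) (q₁fun u - (0, t))

/-- The second intersection point `q₂(u)` of the unit circle with the line through
`q₁(u)` in direction `d(u)`; here `‖d‖² = ⟪d, d⟫`. -/
noncomputable def q₂fun (t c u : ℝ) : ℝ × ℝ :=
  q₁fun u -
    (2 * inner2 (q₁fun u) (dfun t c u) / inner2 (dfun t c u) (dfun t c u)) • dfun t c u

section aux
variable (t c : ℝ)

noncomputable def Sq (u : ℝ) : ℝ := Real.sqrt (1 - u ^ 2)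
noncomputable def Cf (c u : ℝ) : ℝ := Real.cos (Real.pi/2 - c*u)
noncomputable def Sf (c u : ℝ) : ℝ := Real.sin (Real.pi/2 - c*u)
noncomputable def D1 (t c u : ℝ) : ℝ := u * Cf c u - (Sq u - t) * Sf c u
noncomputable def D2 (t c u : ℝ) : ℝ := u * Sf c u + (Sq u - t) * Cf c u

lemma hSq : HasDerivAt Sq 0 0 := by
  have h1 : HasDerivAt (fun u : ℝ => 1 - u ^ 2) (-(2 * (0:ℝ)^1)) 0 :=
    (hasDerivAt_pow 2 (0:ℝ)).const_sub 1
  have h2 := (Real.hasDerivAt_sqrt (by norm_num : (1:ℝ) - 0^2 ≠ 0)).comp 0 h1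
  refine h2.congr_deriv ?_
  norm_num

lemma hCf : HasDerivAt (Cf c) c 0 := by
  have hθ : HasDerivAt (fun u : ℝ => Real.pi/2 - c*u) (-(c*1)) 0 :=
    ((hasDerivAt_id (0:ℝ)).const_mul c).const_sub _
  have h := (Real.hasDerivAt_cos (Real.pi/2 - c*0)).comp 0 hθ
  refine h.congr_deriv ?_
  simp

lemma hSf : HasDerivAt (Sf c) 0 0 := by
  have hθ : HasDerivAt (fun u : ℝ => Real.pi/2 - c*u) (-(c*1)) 0 :=
    ((hasDerivAt_id (0:ℝ)).const_mul c).const_sub _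
  have h := (Real.hasDerivAt_sin (Real.pi/2 - c*0)).comp 0 hθ
  refine h.congr_deriv ?_
  simp

lemma Sq0 : Sq 0 = 1 := by simp [Sq]
lemma Cf0 : Cf c 0 = 0 := by simp [Cf]
lemma Sf0 : Sf c 0 = 1 := by simp [Sf]
lemma D10 : D1 t c 0 = t - 1 := by simp [D1, Sq0, Cf0, Sf0]
lemma D20 : D2 t c 0 = 0 := by simp [D2, Sq0, Cf0, Sf0]

lemma hD1 : HasDerivAt (fun u => D1 t c u) 0 0 := by
  have h := ((hasDerivAt_id (0:ℝ)).mul (hCf c)).sub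
    (((hSq).sub_const t).mul (hSf c))
  refine h.congr_deriv ?_
  simp [Sq0, Cf0, Sf0]

lemma hD2 : HasDerivAt (fun u => D2 t c u) (1 + (1-t)*c) 0 := by
  have h := ((hasDerivAt_id (0:ℝ)).mul (hSf c)).add
    (((hSq).sub_const t).mul (hCf c))
  refine h.congr_deriv ?_
  simp [Sq0, Cf0, Sf0]

lemma key (ht1 : t < 1) :
    HasDerivAt (fun u => (q₂fun t c u).1) ((1 + t) / (1 - t) + 2 * c) 0 := by
  have heq : (fun u => (q₂fun t c u).1) = fun u =>
      u - 2 * (u * D1 t c u + Sq u * D2 t c u)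
        / (D1 t c u * D1 t c u + D2 t c u * D2 t c u) * D1 t c u := by
    funext u
    simp [q₂fun, q₁fun, dfun, rotCCW, inner2, Prod.sub_def, smul_eq_mul,
      D1, D2, Sq, Cf, Sf]
  rw [heq]
  have hden0 : D1 t c 0 * D1 t c 0 + D2 t c 0 * D2 t c 0 ≠ 0 := by
    rw [D10, D20]
    nlinarith
  have hN : HasDerivAt (fun u => u * D1 t c u + Sq u * D2 t c u)
      (t + (1-t)*c) 0 := by
    have h := ((hasDerivAt_id (0:ℝ)).mul (hD1 t c)).add ((hSq).mul (hD2 t c))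
    refine h.congr_deriv ?_
    rw [D10, D20, Sq0]
    ring
  have hDen : HasDerivAt (fun u => D1 t c u * D1 t c u + D2 t c u * D2 t c u)
      0 0 := by
    have h := ((hD1 t c).mul (hD1 t c)).add ((hD2 t c).mul (hD2 t c))
    refine h.congr_deriv ?_
    rw [D10, D20]
    ring
  have hQ := ((hN.const_mul 2).div hDen hden0)
  have hF := (hasDerivAt_id (0:ℝ)).sub (hQ.mul (hD1 t c))
  refine hF.congr_deriv ?_
  rw [D10, D20, Sq0]
  have h1 : (1:ℝ) - t ≠ 0 := by linarith
  have h2 : t - 1 ≠ 0 := by linarith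
  field_simp
  ring

end aux


/-- Part (2) of Lemma 3.4 (lem:limit) of the paper: if the chord through `q₁(u)`
makes the angle `π/2 − c·u` with the segment `[p, q₁(u)]`, `p = (0, t)`, then the
first coordinate `u₂(u)` of the second intersection point `q₂(u)` satisfies
`u₂(u)/u → (1 + t)/(1 − t) + 2c` as `u → 0⁺`. -/
theorem stmt2 (t c : ℝ) (ht0 : 0 < t) (ht1 : t < 1) :
    Tendsto (fun u => (q₂fun t c u).1 / u) (nhdsWithin 0 (Set.Ioi 0))
      (nhds ((1 + t) / (1 - t) + 2 * c)) := by
  have h := (hasDerivAt_iff_tendsto_slope.mp (key t c ht1))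
  have h0 : (q₂fun t c 0).1 = 0 := by
    simp [q₂fun, q₁fun, dfun, rotCCW, inner2, Prod.sub_def, smul_eq_mul]
  have heq : slope (fun u => (q₂fun t c u).1) 0 = fun u => (q₂fun t c u).1 / u := by
    funext u
    simp [slope, h0, div_eq_inv_mul]
  rw [heq] at h
  exact h.mono_left (nhdsWithin_mono 0 (by intro x hx; exact ne_of_gt hx))
end
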